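/- Let G be an unmixed bipartite graph on {x_1,...,x_n} ∪ {y_1,...,y_n} with {x_i,y_i} ∈ E(G) for all i. Then L_G = {C̄ : C a minimal vertex cover of G}, where C̄ = {i : x_i ∈ C}, is a sublattice of the Boolean lattice on [n] (closed under union and intersection) containing ∅ and [n]. -/
import Mathlib


open Finset

/-- `C` is a vertex cover of the graph `G`. -/
def IsVC {α : Type*} (G : SimpleGraph α) (C : Finset α) : Prop :=
  ∀ ⦃u v : α⦄, G.Adj u v → u ∈ C ∨ v ∈ C

/-- `C` is a minimal vertex cover of the graph `G`. -/
def IsMinVC {α : Type*} (G : SimpleGraph α) (C : Finset α) : Prop :=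
  IsVC G C ∧ ∀ C' ⊂ C, ¬ IsVC G C'

/-- `G` is unmixed: all minimal vertex covers have the same cardinality. -/
def Unmixed {α : Type*} (G : SimpleGraph α) : Prop :=
  ∀ C C' : Finset α, IsMinVC G C → IsMinVC G C' → C.card = C'.card

/-- `G` is bipartite with respect to the given sum decomposition of its vertex set:
all edges go between the two parts. -/
def Bip {m n : ℕ} (G : SimpleGraph (Fin m ⊕ Fin n)) : Prop :=
  (∀ i j, ¬ G.Adj (Sum.inl i) (Sum.inl j)) ∧ ∀ i j, ¬ G.Adj (Sum.inr i) (Sum.inr j)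

/-- the set `{x_i : i ∈ S} ∪ {y_j : j ∉ S}`, where `x_i = Sum.inl i`, `y_j = Sum.inr j`. -/
def coverOf {n : ℕ} (S : Finset (Fin n)) : Finset (Fin n ⊕ Fin n) :=
  S.image Sum.inl ∪ Sᶜ.image Sum.inr

/-- the "x-part" `C̄ = {i : x_i ∈ C}` of a set of vertices `C`. -/
def xpart {n : ℕ} (C : Finset (Fin n ⊕ Fin n)) : Finset (Fin n) :=
  Finset.univ.filter fun i => Sum.inl i ∈ C

/-- the lattice `L_G` of x-parts of minimal vertex covers of `G` -/
def latticeOf {n : ℕ} (G : SimpleGraph (Fin n ⊕ Fin n)) : Set (Finset (Fin n)) :=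
  {S | ∃ C : Finset (Fin n ⊕ Fin n), IsMinVC G C ∧ S = xpart C}

lemma inl_mem_coverOf {n : ℕ} {S : Finset (Fin n)} {i : Fin n} :
    Sum.inl i ∈ coverOf S ↔ i ∈ S := by simp [coverOf]

lemma inr_mem_coverOf {n : ℕ} {S : Finset (Fin n)} {j : Fin n} :
    Sum.inr j ∈ coverOf S ↔ j ∉ S := by simp [coverOf]

lemma xpart_coverOf {n : ℕ} (S : Finset (Fin n)) : xpart (coverOf S) = S := by
  ext i; simp [xpart, inl_mem_coverOf]

lemma card_coverOf {n : ℕ} (S : Finset (Fin n)) : (coverOf S).card = n := by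
  rw [coverOf, card_union_of_disjoint (by simp [Finset.disjoint_left]),
    card_image_of_injective _ Sum.inl_injective,
    card_image_of_injective _ Sum.inr_injective, card_add_card_compl, Fintype.card_fin]

lemma minVC_coverOf {n : ℕ} (G : SimpleGraph (Fin n ⊕ Fin n))
    (hmatch : ∀ i, G.Adj (Sum.inl i) (Sum.inr i))
    {S : Finset (Fin n)} (h : IsVC G (coverOf S)) : IsMinVC G (coverOf S) := by
  refine ⟨h, fun C' hC' hvc => ?_⟩
  obtain ⟨v, hvS, hvC'⟩ := Finset.exists_of_ssubset hC'
  have hsub := hC'.subset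
  match v with
  | Sum.inl i =>
    rw [inl_mem_coverOf] at hvS
    rcases hvc (hmatch i) with h1 | h1
    · exact hvC' h1
    · exact (inr_mem_coverOf.mp (hsub h1)) hvS
  | Sum.inr j =>
    rw [inr_mem_coverOf] at hvS
    rcases hvc (hmatch j) with h1 | h1
    · exact hvS (inl_mem_coverOf.mp (hsub h1))
    · exact hvC' h1

lemma vc_coverOf_empty {n : ℕ} (G : SimpleGraph (Fin n ⊕ Fin n)) (hbip : Bip G) :
    IsVC G (coverOf (∅ : Finset (Fin n))) := by
  intro u v huv
  match u, v with
  | Sum.inl a, Sum.inl b => exact absurd huv (hbip.1 a b)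
  | Sum.inl a, Sum.inr b => right; simp [inr_mem_coverOf]
  | Sum.inr a, _ => left; simp [coverOf]

lemma card_minVC {n : ℕ} (G : SimpleGraph (Fin n ⊕ Fin n)) (hbip : Bip G)
    (hmatch : ∀ i, G.Adj (Sum.inl i) (Sum.inr i)) (hunm : Unmixed G)
    {C : Finset (Fin n ⊕ Fin n)} (hC : IsMinVC G C) : C.card = n := by
  have h0 := minVC_coverOf G hmatch (vc_coverOf_empty G hbip)
  rw [hunm C _ hC h0, card_coverOf]

lemma minVC_eq {n : ℕ} (G : SimpleGraph (Fin n ⊕ Fin n)) (hbip : Bip G)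
    (hmatch : ∀ i, G.Adj (Sum.inl i) (Sum.inr i)) (hunm : Unmixed G)
    {C : Finset (Fin n ⊕ Fin n)} (hC : IsMinVC G C) : C = coverOf (xpart C) := by
  have hsub : coverOf (xpart C) ⊆ C := by
    intro v hv
    match v with
    | Sum.inl i => rw [inl_mem_coverOf] at hv; simpa [xpart] using hv
    | Sum.inr j =>
      rw [inr_mem_coverOf] at hv
      have hj : Sum.inl j ∉ C := by simpa [xpart] using hv
      rcases hC.1 (hmatch j) with h | h
      · exact absurd h hj
      · exact h
  exact (eq_of_subset_of_card_le hsub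
    (by rw [card_coverOf, card_minVC G hbip hmatch hunm hC])).symm

lemma mem_latticeOf_iff {n : ℕ} (G : SimpleGraph (Fin n ⊕ Fin n)) (hbip : Bip G)
    (hmatch : ∀ i, G.Adj (Sum.inl i) (Sum.inr i)) (hunm : Unmixed G)
    {S : Finset (Fin n)} : S ∈ latticeOf G ↔ IsVC G (coverOf S) := by
  constructor
  · rintro ⟨C, hC, rfl⟩
    rw [← minVC_eq G hbip hmatch hunm hC]
    exact hC.1
  · intro h
    exact ⟨coverOf S, minVC_coverOf G hmatch h, (xpart_coverOf S).symm⟩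

/-- `L_G` is a sublattice of the Boolean lattice on `[n]` containing
`∅` and `[n]`. -/
theorem stmt_5 {n : ℕ} (G : SimpleGraph (Fin n ⊕ Fin n)) (hbip : Bip G)
    (hmatch : ∀ i, G.Adj (Sum.inl i) (Sum.inr i)) (hunm : Unmixed G) :
    (∅ : Finset (Fin n)) ∈ latticeOf G ∧ (Finset.univ : Finset (Fin n)) ∈ latticeOf G ∧
      ∀ S ∈ latticeOf G, ∀ T ∈ latticeOf G,
        S ∪ T ∈ latticeOf G ∧ S ∩ T ∈ latticeOf G := by
  have key : ∀ {S : Finset (Fin n)}, S ∈ latticeOf G ↔ IsVC G (coverOf S) :=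
    fun {S} => mem_latticeOf_iff G hbip hmatch hunm
  refine ⟨key.2 (vc_coverOf_empty G hbip), key.2 ?_, ?_⟩
  · intro u v huv
    match u, v with
    | Sum.inl a, Sum.inl b => exact absurd huv (hbip.1 a b)
    | Sum.inl a, Sum.inr b => left; simp [inl_mem_coverOf]
    | Sum.inr a, Sum.inl b => right; simp [inl_mem_coverOf]
    | Sum.inr a, Sum.inr b => exact absurd huv (hbip.2 a b)
  · intro S hS T hT
    rw [key] at hS hT
    constructor <;> rw [key] <;> intro u v huv <;>
    match u, v with
    | Sum.inl a, Sum.inl b => exact absurd huv (hbip.1 a b)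
    | Sum.inr a, Sum.inr b => exact absurd huv (hbip.2 a b)
    | Sum.inl i, Sum.inr j =>
      have h1 := hS huv; have h2 := hT huv
      simp only [inl_mem_coverOf, inr_mem_coverOf, mem_union, mem_inter] at h1 h2 ⊢
      tauto
    | Sum.inr j, Sum.inl i =>
      have h1 := hS huv; have h2 := hT huv
      simp only [inl_mem_coverOf, inr_mem_coverOf, mem_union, mem_inter] at h1 h2 ⊢
      tauto
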